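/- Let R be a generalized vertical sum of finite posets P and Q (on disjoint carriers X and Y), with a nonempty down-set B⁺ of Q, an up-set B⁻ of P, S⁻ = P restricted to B⁻, S⁺ = Q restricted to B⁺, and a map σ : D(S⁺) → P(B⁻) satisfying σ(T) ⊆ X ∩ ↓_R T ⊆ ↓_P σ(T) for all T ∈ D(S⁺). Assume additionally that Q has a minimum point ⊥ (so ⊥ ∈ B⁺) and that σ is an order isomorphism from D(S⁺) onto D(S⁻). Let P⁺ be the subposet of R induced on X ∪ B⁺. Then h(R) = h(P⁺ ∖ ↓_{P⁺} ⊥) + Σ_{D ∈ D(Q) ∖ D(S⁺)} a_D(R) + Σ_{T ∈ D(S⁻)} ( #{T' ∈ D(S⁻) : T' ⊆ T} ) · a_T(P). -/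

import Mathlib

attribute [local instance] Classical.propDecidable

variable {α : Type*} [Fintype α] [PartialOrder α]

/-- The down-sets of the subposet of `α` induced on the carrier `C`. -/
noncomputable def dsOn (C : Finset α) : Finset (Finset α) :=
  Finset.univ.filter fun D => D ⊆ C ∧ ∀ a ∈ C, ∀ b ∈ D, a ≤ b → a ∈ D

/-- `aCoef C Yp T` is the sum, over all down-sets `D` of the subposet induced on `C`
with `D ∩ Yp = T`, of the number of down-sets `E` of that subposet with `E ⊆ D`. -/
noncomputable def aCoef (C Yp T : Finset α) : ℕ :=
  ∑ D ∈ (dsOn C).filter (fun D => D ∩ Yp = T),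
    ((dsOn C).filter fun E => E ⊆ D).card

/-- The down closure `↓_R S` of `S` in the ambient poset. -/
noncomputable def dcl (S : Finset α) : Finset α :=
  Finset.univ.filter fun a => ∃ b ∈ S, a ≤ b

/-- The down closure of `S` within the subposet induced on the carrier `C`. -/
noncomputable def dclOn (C S : Finset α) : Finset α :=
  C.filter fun a => ∃ b ∈ S, b ∈ C ∧ a ≤ b

/-- Let `R` be a finite poset on `X ∪ Y` (here: the ambient type `α`), `X, Y` disjoint,
which is a generalized vertical sum of `P = R|X` and `Q = R|Y`; let `B⁻` be an up-set
of `P`, `B⁺` a nonempty down-set of `Q`, `S⁻ = P|B⁻`, `S⁺ = Q|B⁺`, and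
`σ : D(S⁺) → P(B⁻)` with `σ(T) ⊆ X ∩ ↓_R T ⊆ ↓_P σ(T)`.  Assume `Q` has a minimum
point `⊥` and `σ` is an order isomorphism from `D(S⁺)` onto `D(S⁻)`.  With
`P⁺ = R|(X ∪ B⁺)`, we have
`h(R) = h(P⁺ ∖ ↓_{P⁺} ⊥) + ∑_{D ∈ D(Q)∖D(S⁺)} a_D(R)`
`+ ∑_{T ∈ D(S⁻)} #{T' ∈ D(S⁻) : T' ⊆ T} · a_T(P)`. -/
noncomputable def pairsOn (C : Finset α) : Finset (Finset α × Finset α) :=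
  (dsOn C ×ˢ dsOn C).filter fun p => p.2 ⊆ p.1

lemma mem_dsOn {C D : Finset α} :
    D ∈ dsOn C ↔ D ⊆ C ∧ ∀ a ∈ C, ∀ b ∈ D, a ≤ b → a ∈ D := by
  simp [dsOn]

lemma mem_pairsOn {C : Finset α} {p : Finset α × Finset α} :
    p ∈ pairsOn C ↔ p.1 ∈ dsOn C ∧ p.2 ∈ dsOn C ∧ p.2 ⊆ p.1 := by
  simp [pairsOn, Finset.mem_filter, Finset.mem_product, and_assoc]

lemma pairsOn_card (C : Finset α) :
    (pairsOn C).card = ∑ D ∈ dsOn C, ((dsOn C).filter fun E => E ⊆ D).card := by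
  rw [Finset.card_eq_sum_card_fiberwise (f := Prod.fst) (t := dsOn C)
    (fun p hp => (mem_pairsOn.mp hp).1)]
  refine Finset.sum_congr rfl fun D hD => ?_
  refine Finset.card_bij' (fun p _ => p.2) (fun E hE => (D, E)) ?_ ?_ ?_ ?_
  · intro p hp
    rw [Finset.mem_filter] at hp ⊢
    obtain ⟨hp1, hp2⟩ := hp
    rw [mem_pairsOn] at hp1
    exact ⟨hp1.2.1, hp2 ▸ hp1.2.2⟩
  · intro E hE
    rw [Finset.mem_filter] at hE
    rw [Finset.mem_filter, mem_pairsOn]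
    exact ⟨⟨hD, hE.1, hE.2⟩, rfl⟩
  · intro p hp
    rw [Finset.mem_filter] at hp
    exact Prod.ext hp.2.symm rfl
  · intro E hE; rfl

lemma homCard : Nat.card (α →o Fin 3) = (pairsOn (Finset.univ : Finset α)).card := by
  have key : Nat.card (α →o Fin 3)
      = Nat.card {p : Finset α × Finset α // p ∈ pairsOn (Finset.univ : Finset α)} := by
    have hmem : ∀ f : α →o Fin 3,
        ((Finset.univ.filter fun x => f x ≤ 1, Finset.univ.filter fun x => f x = 0) :
          Finset α × Finset α) ∈ pairsOn (Finset.univ : Finset α) := by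
      intro f
      rw [mem_pairsOn]
      refine ⟨mem_dsOn.mpr ⟨Finset.subset_univ _, ?_⟩, mem_dsOn.mpr ⟨Finset.subset_univ _, ?_⟩, ?_⟩
      · intro a _ b hb hab
        simp only [Finset.mem_filter, Finset.mem_univ, true_and] at hb ⊢
        exact le_trans (f.monotone hab) hb
      · intro a _ b hb hab
        simp only [Finset.mem_filter, Finset.mem_univ, true_and] at hb ⊢
        have := f.monotone hab
        rw [hb] at this
        exact le_antisymm this (Fin.zero_le _)
      · intro x hx
        simp only [Finset.mem_filter, Finset.mem_univ, true_and] at hx ⊢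
        rw [hx]; decide
    apply Nat.card_eq_of_bijective (fun f => ⟨_, hmem f⟩)
    constructor
    · intro f g h
      simp only [Subtype.mk_eq_mk, Prod.mk.injEq] at h
      ext x
      have h1 := Finset.ext_iff.mp h.1 x
      have h2 := Finset.ext_iff.mp h.2 x
      simp only [Finset.mem_filter, Finset.mem_univ, true_and] at h1 h2
      have hf3 := (f x).isLt
      have hg3 := (g x).isLt
      simp only [Fin.le_def, Fin.ext_iff, Fin.val_zero, Fin.val_one] at h1 h2
      omega
    · rintro ⟨⟨D, E⟩, hp⟩
      rw [mem_pairsOn] at hp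
      obtain ⟨hD, hE, hED⟩ := hp
      rw [mem_dsOn] at hD hE
      refine ⟨⟨fun x => if x ∈ E then 0 else if x ∈ D then 1 else 2, ?_⟩, ?_⟩
      · intro a b hab
        dsimp only
        by_cases hbE : b ∈ E
        · have : a ∈ E := hE.2 a (Finset.mem_univ _) b hbE hab
          simp [this, hbE]
        · by_cases haE : a ∈ E
          · simp only [haE, if_pos]
            exact Fin.zero_le _
          · by_cases hbD : b ∈ D
            · have : a ∈ D := hD.2 a (Finset.mem_univ _) b hbD hab
              simp [haE, hbE, this, hbD]
            · simp only [haE, hbE, hbD, if_neg, if_false]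
              have : ∀ v : Fin 3, v ≤ 2 := by decide
              split_ifs <;> first | exact this _ | rfl
      · apply Subtype.ext
        simp only [Prod.mk.injEq]
        constructor
        · ext x
          simp only [Finset.mem_filter, Finset.mem_univ, true_and, OrderHom.coe_mk]
          constructor
          · intro hx
            by_cases hxE : x ∈ E
            · exact hED hxE
            · by_cases hxD : x ∈ D
              · exact hxD
              · simp [hxE, hxD, DFunLike.coe] at hx
          · intro hx
            by_cases hxE : x ∈ E
            · simp [hxE, DFunLike.coe]
            · simp [hxE, hx, DFunLike.coe]
        · ext x
          simp only [Finset.mem_filter, Finset.mem_univ, true_and, OrderHom.coe_mk]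
          constructor
          · intro hx
            by_cases hxE : x ∈ E
            · exact hxE
            · by_cases hxD : x ∈ D <;> simp [hxE, hxD, DFunLike.coe] at hx
          · intro hx; simp [hx, DFunLike.coe]
  rw [key, Nat.card_eq_fintype_card, Fintype.card_coe]

lemma homCardOn (C : Finset α) :
    Nat.card ({x : α // x ∈ C} →o Fin 3) = (pairsOn C).card := by
  rw [homCard]
  set emb : {x : α // x ∈ C} ↪ α := Function.Embedding.subtype _ with hemb
  have hkey : ∀ D' : Finset {x : α // x ∈ C},
      D' ∈ dsOn (Finset.univ : Finset {x : α // x ∈ C}) ↔ D'.map emb ∈ dsOn C := by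
    intro D'
    rw [mem_dsOn, mem_dsOn]
    constructor
    · rintro ⟨-, hdown⟩
      constructor
      · intro a ha
        rw [Finset.mem_map] at ha
        obtain ⟨b, -, rfl⟩ := ha
        exact b.2
      · intro a ha b hb hab
        rw [Finset.mem_map] at hb ⊢
        obtain ⟨b', hb', rfl⟩ := hb
        exact ⟨⟨a, ha⟩, hdown ⟨a, ha⟩ (Finset.mem_univ _) b' hb' hab, rfl⟩
    · rintro ⟨-, hdown⟩
      refine ⟨Finset.subset_univ _, ?_⟩
      intro a _ b hb hab
      have : (a : α) ∈ D'.map emb :=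
        hdown a a.2 b (Finset.mem_map_of_mem _ hb) hab
      rw [Finset.mem_map] at this
      obtain ⟨w, hw, hwa⟩ := this
      have : w = a := Subtype.ext hwa
      exact this ▸ hw
  apply Finset.card_nbij' (fun p => (p.1.map emb, p.2.map emb))
    (fun q => (q.1.subtype (· ∈ C), q.2.subtype (· ∈ C)))
  · intro p hp
    rw [Finset.mem_coe, mem_pairsOn] at hp ⊢
    exact ⟨(hkey _).mp hp.1, (hkey _).mp hp.2.1, Finset.map_subset_map.mpr hp.2.2⟩
  · intro q hq
    rw [Finset.mem_coe, mem_pairsOn] at hq ⊢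
    have h1 : (q.1.subtype (· ∈ C)).map emb = q.1 := by
      rw [Finset.subtype_map, Finset.filter_true_of_mem]
      exact fun x hx => (mem_dsOn.mp hq.1).1 hx
    have h2 : (q.2.subtype (· ∈ C)).map emb = q.2 := by
      rw [Finset.subtype_map, Finset.filter_true_of_mem]
      exact fun x hx => (mem_dsOn.mp hq.2.1).1 hx
    refine ⟨(hkey _).mpr (by rw [h1]; exact hq.1), (hkey _).mpr (by rw [h2]; exact hq.2.1), ?_⟩
    intro x hx
    rw [Finset.mem_subtype] at hx ⊢
    exact hq.2.2 hx
  · intro p hp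
    have : ∀ s : Finset {x : α // x ∈ C}, (s.map emb).subtype (· ∈ C) = s := by
      intro s; ext x
      rw [Finset.mem_subtype, Finset.mem_map]
      constructor
      · rintro ⟨w, hw, hwx⟩
        exact (Subtype.ext hwx : w = x) ▸ hw
      · intro hx; exact ⟨x, hx, rfl⟩
    exact Prod.ext (this p.1) (this p.2)
  · intro q hq
    rw [Finset.mem_coe, mem_pairsOn] at hq
    have h1 : (q.1.subtype (· ∈ C)).map emb = q.1 := by
      rw [Finset.subtype_map, Finset.filter_true_of_mem]
      exact fun x hx => (mem_dsOn.mp hq.1).1 hx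
    have h2 : (q.2.subtype (· ∈ C)).map emb = q.2 := by
      rw [Finset.subtype_map, Finset.filter_true_of_mem]
      exact fun x hx => (mem_dsOn.mp hq.2.1).1 hx
    exact Prod.ext h1 h2

theorem stmt3 (X Y Bm Bp : Finset α) (bot : α)
    (hdisj : Disjoint X Y) (hcover : X ∪ Y = Finset.univ)
    (hgvs : ∀ a b : α, a ≤ b →
      (a ∈ X ∧ b ∈ X) ∨ (a ∈ Y ∧ b ∈ Y) ∨ (a ∈ X ∧ b ∈ Y))
    (hBmX : Bm ⊆ X) (hBmUp : ∀ a ∈ Bm, ∀ b ∈ X, a ≤ b → b ∈ Bm)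
    (hBpY : Bp ⊆ Y) (hBpDown : ∀ a ∈ Y, ∀ b ∈ Bp, a ≤ b → a ∈ Bp)
    (hBpne : Bp.Nonempty)
    (hbotY : bot ∈ Y) (hbotmin : ∀ y ∈ Y, bot ≤ y)
    (σ : Finset α → Finset α)
    (hσ : ∀ T ∈ dsOn Bp, σ T ⊆ Bm ∧ σ T ⊆ X ∩ dcl T ∧ X ∩ dcl T ⊆ dclOn X (σ T))
    (hσmem : ∀ T ∈ dsOn Bp, σ T ∈ dsOn Bm)
    (hσbij : Set.BijOn σ ↑(dsOn Bp) ↑(dsOn Bm))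
    (hσiso : ∀ T ∈ dsOn Bp, ∀ T' ∈ dsOn Bp, (T ⊆ T' ↔ σ T ⊆ σ T')) :
    Nat.card (α →o Fin 3)
      = Nat.card ({x : α // x ∈ (X ∪ Bp) \ dclOn (X ∪ Bp) {bot}} →o Fin 3)
        + ∑ D ∈ dsOn Y \ dsOn Bp, aCoef Finset.univ Y D
        + ∑ T ∈ dsOn Bm, ((dsOn Bm).filter fun T' => T' ⊆ T).card * aCoef X Bm T := by
  classical
  -- basic facts
  have hnXY : ∀ a : α, a ∉ X → a ∈ Y := by
    intro a ha
    have : a ∈ X ∪ Y := hcover ▸ Finset.mem_univ a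
    rcases Finset.mem_union.mp this with h | h
    · exact absurd h ha
    · exact h
  have hXnY : ∀ a : α, a ∈ X → a ∉ Y := fun a ha hy =>
    Finset.disjoint_left.mp hdisj ha hy
  have hXdown : ∀ a b : α, a ≤ b → b ∈ X → a ∈ X := by
    intro a b hab hb
    rcases hgvs a b hab with ⟨h, -⟩ | ⟨-, h⟩ | ⟨h, -⟩
    · exact h
    · exact absurd h (hXnY b hb)
    · exact h
  have hYup : ∀ a b : α, a ≤ b → a ∈ Y → b ∈ Y := by
    intro a b hab ha
    rcases hgvs a b hab with ⟨h, -⟩ | ⟨-, h⟩ | ⟨h, -⟩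
    · exact absurd ha (hXnY a h)
    · exact h
    · exact absurd ha (hXnY a h)
  have hbotBp : bot ∈ Bp := by
    obtain ⟨b, hb⟩ := hBpne
    exact hBpDown bot hbotY b hb (hbotmin b (hBpY hb))
  have hbotXBp : bot ∈ X ∪ Bp := Finset.mem_union_right _ hbotBp
  -- characterizations of down-set families
  have hds1 : ∀ D : Finset α, D ∈ dsOn (X ∪ Bp) ↔ D ∈ dsOn Finset.univ ∧ D ∩ Y ⊆ Bp := by
    intro D
    rw [mem_dsOn, mem_dsOn]
    constructor
    · rintro ⟨hsub, hdown⟩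
      refine ⟨⟨Finset.subset_univ _, ?_⟩, ?_⟩
      · intro a _ b hb hab
        by_cases ha : a ∈ X ∪ Bp
        · exact hdown a ha b hb hab
        · exfalso
          have haY : a ∈ Y := hnXY a (fun h => ha (Finset.mem_union_left _ h))
          have hbY : b ∈ Y := hYup a b hab haY
          have hbBp : b ∈ Bp := by
            rcases Finset.mem_union.mp (hsub hb) with h | h
            · exact absurd hbY (hXnY b h)
            · exact h
          exact ha (Finset.mem_union_right _ (hBpDown a haY b hbBp hab))
      · intro x hx
        rw [Finset.mem_inter] at hx
        rcases Finset.mem_union.mp (hsub hx.1) with h | h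
        · exact absurd hx.2 (hXnY x h)
        · exact h
    · rintro ⟨⟨-, hdown⟩, hDY⟩
      constructor
      · intro x hx
        by_cases hxX : x ∈ X
        · exact Finset.mem_union_left _ hxX
        · exact Finset.mem_union_right _ (hDY (Finset.mem_inter.mpr ⟨hx, hnXY x hxX⟩))
      · intro a _ b hb hab
        exact hdown a (Finset.mem_univ a) b hb hab
  have hds2 : ∀ T : Finset α, T ∈ dsOn Bp ↔ T ∈ dsOn Y ∧ T ⊆ Bp := by
    intro T
    rw [mem_dsOn, mem_dsOn]
    constructor
    · rintro ⟨hsub, hdown⟩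
      refine ⟨⟨hsub.trans hBpY, ?_⟩, hsub⟩
      intro a ha b hb hab
      exact hdown a (hBpDown a ha b (hsub hb) hab) b hb hab
    · rintro ⟨⟨-, hdown⟩, hsub⟩
      exact ⟨hsub, fun a ha b hb hab => hdown a (hBpY ha) b hb hab⟩
  have hdsBpY : dsOn Bp ⊆ dsOn Y := fun T hT => ((hds2 T).mp hT).1
  have hdsX : ∀ E : Finset α, E ∈ dsOn (X ∪ Bp) ∧ bot ∉ E ↔ E ∈ dsOn X := by
    intro E
    constructor
    · rintro ⟨hE, hbot⟩
      obtain ⟨hsub, hdown⟩ := mem_dsOn.mp hE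
      have hEX : E ⊆ X := by
        intro x hx
        by_contra hxX
        have hxY : x ∈ Y := hnXY x hxX
        have hxBp : x ∈ Bp := by
          rcases Finset.mem_union.mp (hsub hx) with h | h
          · exact absurd hxY (hXnY x h)
          · exact h
        exact hbot (hdown bot hbotXBp x hx (hbotmin x hxY))
      rw [mem_dsOn]
      exact ⟨hEX, fun a ha b hb hab => hdown a (Finset.mem_union_left _ ha) b hb hab⟩
    · intro hE
      obtain ⟨hsub, hdown⟩ := mem_dsOn.mp hE
      constructor
      · rw [mem_dsOn]
        refine ⟨hsub.trans Finset.subset_union_left, ?_⟩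
        intro a _ b hb hab
        exact hdown a (hXdown a b hab (hsub hb)) b hb hab
      · exact fun h => hXnY bot (hsub h) hbotY
  -- step 1: total count fibered over down-sets of Q
  have hmaps1 : ∀ D ∈ dsOn (Finset.univ : Finset α), D ∩ Y ∈ dsOn Y := by
    intro D hD
    obtain ⟨-, hdown⟩ := mem_dsOn.mp hD
    rw [mem_dsOn]
    refine ⟨Finset.inter_subset_right, ?_⟩
    intro a ha b hb hab
    rw [Finset.mem_inter] at hb ⊢
    exact ⟨hdown a (Finset.mem_univ a) b hb.1 hab, ha⟩
  have step1 : (pairsOn (Finset.univ : Finset α)).card = ∑ T ∈ dsOn Y, aCoef Finset.univ Y T := by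
    rw [pairsOn_card]
    rw [← Finset.sum_fiberwise_of_maps_to hmaps1 (fun D => ((dsOn (Finset.univ : Finset α)).filter fun E => E ⊆ D).card)]
    rfl
  -- step 2: split
  have step2 : ∑ T ∈ dsOn Y, aCoef Finset.univ Y T
      = ∑ T ∈ dsOn Y \ dsOn Bp, aCoef Finset.univ Y T + ∑ T ∈ dsOn Bp, aCoef Finset.univ Y T :=
    (Finset.sum_sdiff hdsBpY).symm
  -- step 3
  have hinner3 : ∀ D ∈ dsOn (X ∪ Bp),
      (dsOn (Finset.univ : Finset α)).filter (fun E => E ⊆ D)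
        = (dsOn (X ∪ Bp)).filter (fun E => E ⊆ D) := by
    intro D hD
    ext E
    simp only [Finset.mem_filter]
    constructor
    · rintro ⟨hE, hED⟩
      refine ⟨(hds1 E).mpr ⟨hE, ?_⟩, hED⟩
      exact (Finset.inter_subset_inter_right hED : E ∩ Y ⊆ D ∩ Y).trans ((hds1 D).mp hD).2
    · rintro ⟨hE, hED⟩
      exact ⟨((hds1 E).mp hE).1, hED⟩
  have hmaps3 : ∀ D ∈ dsOn (X ∪ Bp), D ∩ Y ∈ dsOn Bp := by
    intro D hD
    exact (hds2 _).mpr ⟨hmaps1 D ((hds1 D).mp hD).1, ((hds1 D).mp hD).2⟩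
  have step3 : ∑ T ∈ dsOn Bp, aCoef Finset.univ Y T = (pairsOn (X ∪ Bp)).card := by
    rw [pairsOn_card]
    rw [← Finset.sum_fiberwise_of_maps_to hmaps3 (fun D => ((dsOn (X ∪ Bp)).filter fun E => E ⊆ D).card)]
    refine Finset.sum_congr rfl fun T hT => ?_
    have hTBp : T ⊆ Bp := ((hds2 T).mp hT).2
    have hsets : (dsOn (Finset.univ : Finset α)).filter (fun D => D ∩ Y = T)
        = (dsOn (X ∪ Bp)).filter (fun D => D ∩ Y = T) := by
      ext D
      simp only [Finset.mem_filter]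
      constructor
      · rintro ⟨hD, hDT⟩
        exact ⟨(hds1 D).mpr ⟨hD, hDT ▸ hTBp⟩, hDT⟩
      · rintro ⟨hD, hDT⟩
        exact ⟨((hds1 D).mp hD).1, hDT⟩
    rw [aCoef, hsets]
    refine Finset.sum_congr rfl fun D hD => ?_
    rw [hinner3 D (Finset.mem_filter.mp hD).1]
  -- step 4 setup
  have hLmem : ∀ a : α, a ∈ dclOn (X ∪ Bp) {bot} ↔ a ∈ X ∪ Bp ∧ a ≤ bot := by
    intro a
    simp only [dclOn, Finset.mem_filter, Finset.mem_singleton]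
    constructor
    · rintro ⟨ha, b, rfl, -, hb⟩; exact ⟨ha, hb⟩
    · rintro ⟨ha, hab⟩; exact ⟨ha, bot, rfl, hbotXBp, hab⟩
  set L := dclOn (X ∪ Bp) {bot} with hLdef
  have hbotL : bot ∈ L := (hLmem bot).mpr ⟨hbotXBp, le_refl _⟩
  have hLXBp : L ⊆ X ∪ Bp := fun a ha => ((hLmem a).mp ha).1
  have hLds : L ∈ dsOn (X ∪ Bp) := by
    rw [mem_dsOn]
    refine ⟨hLXBp, ?_⟩
    intro a ha b hb hab
    exact (hLmem a).mpr ⟨ha, le_trans hab ((hLmem b).mp hb).2⟩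
  have hLE : ∀ E ∈ dsOn (X ∪ Bp), bot ∈ E → L ⊆ E := by
    intro E hE hbot a ha
    obtain ⟨haX, hab⟩ := (hLmem a).mp ha
    exact (mem_dsOn.mp hE).2 a haX bot hbot hab
  have hsdiffds : ∀ D ∈ dsOn (X ∪ Bp), D \ L ∈ dsOn ((X ∪ Bp) \ L) := by
    intro D hD
    rw [mem_dsOn]
    constructor
    · intro x hx
      rw [Finset.mem_sdiff] at hx ⊢
      exact ⟨(mem_dsOn.mp hD).1 hx.1, hx.2⟩
    · intro a ha b hb hab
      rw [Finset.mem_sdiff] at ha hb ⊢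
      exact ⟨(mem_dsOn.mp hD).2 a ha.1 b hb.1 hab, ha.2⟩
  have hunionds : ∀ D ∈ dsOn ((X ∪ Bp) \ L), D ∪ L ∈ dsOn (X ∪ Bp) := by
    intro D hD
    rw [mem_dsOn]
    constructor
    · exact Finset.union_subset ((mem_dsOn.mp hD).1.trans Finset.sdiff_subset) hLXBp
    · intro a ha b hb hab
      rcases Finset.mem_union.mp hb with hb | hb
      · by_cases haL : a ∈ L
        · exact Finset.mem_union_right _ haL
        · exact Finset.mem_union_left _
            ((mem_dsOn.mp hD).2 a (Finset.mem_sdiff.mpr ⟨ha, haL⟩) b hb hab)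
      · exact Finset.mem_union_right _ ((mem_dsOn.mp hLds).2 a ha b hb hab)
  have hcanc : ∀ s : Finset α, s ∈ dsOn ((X ∪ Bp) \ L) → (s ∪ L) \ L = s := by
    intro s hs
    ext x
    simp only [Finset.mem_sdiff, Finset.mem_union]
    constructor
    · rintro ⟨h | h, hn⟩
      · exact h
      · exact absurd h hn
    · intro hx
      exact ⟨Or.inl hx, fun hxL => (Finset.mem_sdiff.mp ((mem_dsOn.mp hs).1 hx)).2 hxL⟩
  have step4a : ((pairsOn (X ∪ Bp)).filter fun p => bot ∈ p.2).card
      = (pairsOn ((X ∪ Bp) \ L)).card := by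
    apply Finset.card_nbij' (fun p => (p.1 \ L, p.2 \ L)) (fun q => (q.1 ∪ L, q.2 ∪ L))
    · intro p hp
      rw [Finset.mem_coe, Finset.mem_filter, mem_pairsOn] at hp
      rw [Finset.mem_coe, mem_pairsOn]
      exact ⟨hsdiffds _ hp.1.1, hsdiffds _ hp.1.2.1,
        Finset.sdiff_subset_sdiff hp.1.2.2 (Finset.Subset.refl _)⟩
    · intro q hq
      rw [Finset.mem_coe, mem_pairsOn] at hq
      rw [Finset.mem_coe, Finset.mem_filter, mem_pairsOn]
      exact ⟨⟨hunionds _ hq.1, hunionds _ hq.2.1,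
        Finset.union_subset_union hq.2.2 (Finset.Subset.refl _)⟩,
        Finset.mem_union_right _ hbotL⟩
    · intro p hp
      rw [Finset.mem_coe, Finset.mem_filter, mem_pairsOn] at hp
      have h2 : L ⊆ p.2 := hLE _ hp.1.2.1 hp.2
      have h1 : L ⊆ p.1 := h2.trans hp.1.2.2
      exact Prod.ext (Finset.sdiff_union_of_subset h1) (Finset.sdiff_union_of_subset h2)
    · intro q hq
      rw [Finset.mem_coe, mem_pairsOn] at hq
      exact Prod.ext (hcanc _ hq.1) (hcanc _ hq.2.1)
  -- step 4b preparation
  have hmapsX : ∀ D ∈ dsOn (X ∪ Bp), D ∩ X ∈ dsOn X := by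
    intro D hD
    rw [mem_dsOn]
    refine ⟨Finset.inter_subset_right, ?_⟩
    intro a ha b hb hab
    rw [Finset.mem_inter] at hb ⊢
    exact ⟨(mem_dsOn.mp hD).2 a (Finset.mem_union_left _ ha) b hb.1 hab, ha⟩
  have hmapsBm : ∀ A ∈ dsOn X, A ∩ Bm ∈ dsOn Bm := by
    intro A hA
    rw [mem_dsOn]
    refine ⟨Finset.inter_subset_right, ?_⟩
    intro a ha b hb hab
    rw [Finset.mem_inter] at hb ⊢
    exact ⟨(mem_dsOn.mp hA).2 a (hBmX ha) b hb.1 hab, ha⟩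
  have hDBp : ∀ D ∈ dsOn (X ∪ Bp), D ∩ Bp ∈ dsOn Bp := by
    intro D hD
    rw [mem_dsOn]
    refine ⟨Finset.inter_subset_right, ?_⟩
    intro a ha b hb hab
    rw [Finset.mem_inter] at hb ⊢
    exact ⟨(mem_dsOn.mp hD).2 a (Finset.mem_union_right _ ha) b hb.1 hab, ha⟩
  have hσsub : ∀ D ∈ dsOn (X ∪ Bp), σ (D ∩ Bp) ⊆ D ∩ X := by
    intro D hD s hs
    have h1 := (hσ (D ∩ Bp) (hDBp D hD)).2.1 hs
    rw [Finset.mem_inter] at h1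
    obtain ⟨hsX, hsd⟩ := h1
    rw [dcl, Finset.mem_filter] at hsd
    obtain ⟨-, b, hb, hsb⟩ := hsd
    have hbD : b ∈ D := (Finset.mem_inter.mp hb).1
    exact Finset.mem_inter.mpr
      ⟨(mem_dsOn.mp hD).2 s (Finset.mem_union_left _ hsX) b hbD hsb, hsX⟩
  have hAT : ∀ A ∈ dsOn X, ∀ T ∈ dsOn Bp, σ T ⊆ A → A ∪ T ∈ dsOn (X ∪ Bp) := by
    intro A hA T hT hσTA
    rw [mem_dsOn]
    constructor
    · exact Finset.union_subset ((mem_dsOn.mp hA).1.trans Finset.subset_union_left)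
        (((hds2 T).mp hT).2.trans Finset.subset_union_right)
    · intro a ha b hb hab
      rcases Finset.mem_union.mp hb with hb | hb
      · have haX : a ∈ X := hXdown a b hab ((mem_dsOn.mp hA).1 hb)
        exact Finset.mem_union_left _ ((mem_dsOn.mp hA).2 a haX b hb hab)
      · by_cases haX : a ∈ X
        · have hdclT : a ∈ X ∩ dcl T := by
            rw [Finset.mem_inter, dcl, Finset.mem_filter]
            exact ⟨haX, Finset.mem_univ a, b, hb, hab⟩
          have := (hσ T hT).2.2 hdclT
          rw [dclOn, Finset.mem_filter] at this
          obtain ⟨-, s, hsσ, hsX, has⟩ := this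
          exact Finset.mem_union_left _ ((mem_dsOn.mp hA).2 a haX s (hσTA hsσ) has)
        · have haBp : a ∈ Bp := (Finset.mem_union.mp ha).resolve_left haX
          exact Finset.mem_union_right _ ((mem_dsOn.mp hT).2 a haBp b hb hab)
  have hfiber : ∀ A ∈ dsOn X, ((dsOn (X ∪ Bp)).filter fun D => D ∩ X = A).card
      = ((dsOn Bm).filter fun U => U ⊆ A).card := by
    intro A hA
    have hAX : A ⊆ X := (mem_dsOn.mp hA).1
    have e1 : ((dsOn (X ∪ Bp)).filter fun D => D ∩ X = A).card
        = ((dsOn Bp).filter fun T => σ T ⊆ A).card := by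
      have hTX : ∀ T ∈ dsOn Bp, (A ∪ T) ∩ X = A := by
        intro T hT
        ext x
        simp only [Finset.mem_inter, Finset.mem_union]
        constructor
        · rintro ⟨h | h, hx⟩
          · exact h
          · exact absurd (hBpY (((hds2 T).mp hT).2 h)) (hXnY x hx)
        · intro hx
          exact ⟨Or.inl hx, hAX hx⟩
      have hTBp : ∀ T ∈ dsOn Bp, (A ∪ T) ∩ Bp = T := by
        intro T hT
        ext x
        simp only [Finset.mem_inter, Finset.mem_union]
        constructor
        · rintro ⟨h | h, hx⟩
          · exact absurd (hBpY hx) (hXnY x (hAX h))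
          · exact h
        · intro hx
          exact ⟨Or.inr hx, ((hds2 T).mp hT).2 hx⟩
      apply Finset.card_nbij' (fun D => D ∩ Bp) (fun T => A ∪ T)
      · intro D hD
        rw [Finset.mem_coe, Finset.mem_filter] at hD ⊢
        exact ⟨hDBp D hD.1, hD.2 ▸ hσsub D hD.1⟩
      · intro T hT
        rw [Finset.mem_coe, Finset.mem_filter] at hT ⊢
        exact ⟨hAT A hA T hT.1 hT.2, hTX T hT.1⟩
      · intro D hD
        rw [Finset.mem_coe, Finset.mem_filter] at hD
        have hDsub : D ⊆ X ∪ Bp := (mem_dsOn.mp hD.1).1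
        ext x
        simp only [Finset.mem_union, Finset.mem_inter]
        constructor
        · rintro (h | h)
          · exact hD.2 ▸ h |> fun h' => (Finset.mem_inter.mp (hD.2 ▸ h : x ∈ D ∩ X)).1
          · exact h.1
        · intro hx
          rcases Finset.mem_union.mp (hDsub hx) with h | h
          · exact Or.inl (hD.2 ▸ Finset.mem_inter.mpr ⟨hx, h⟩)
          · exact Or.inr ⟨hx, h⟩
      · intro T hT
        rw [Finset.mem_coe, Finset.mem_filter] at hT
        exact hTBp T hT.1
    have e2 : ((dsOn Bp).filter fun T => σ T ⊆ A).card
        = ((dsOn Bm).filter fun U => U ⊆ A).card := by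
      apply Finset.card_nbij σ
      · intro T hT
        rw [Finset.mem_coe, Finset.mem_filter] at hT ⊢
        exact ⟨hσmem T hT.1, hT.2⟩
      · exact hσbij.injOn.mono (fun T hT => (Finset.mem_filter.mp hT).1)
      · intro U hU
        obtain ⟨hUBm, hUA⟩ := Finset.mem_filter.mp hU
        obtain ⟨T, hT, rfl⟩ := hσbij.surjOn hUBm
        exact ⟨T, Finset.mem_coe.mpr (Finset.mem_filter.mpr ⟨hT, hUA⟩), rfl⟩
    rw [e1, e2]
  have hfib1 : ∀ D ∈ dsOn (X ∪ Bp),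
      (((pairsOn (X ∪ Bp)).filter fun p => bot ∉ p.2).filter fun p => p.1 = D).card
      = ((dsOn X).filter fun E => E ⊆ D ∩ X).card := by
    intro D hD
    apply Finset.card_nbij' (fun p => p.2) (fun E => (D, E))
    · intro p hp
      simp only [Finset.mem_coe, Finset.mem_filter] at hp
      obtain ⟨⟨hp1, hbot⟩, hfst⟩ := hp
      rw [mem_pairsOn] at hp1
      have hEX : p.2 ∈ dsOn X := (hdsX p.2).mp ⟨hp1.2.1, hbot⟩
      rw [Finset.mem_coe, Finset.mem_filter]
      refine ⟨hEX, ?_⟩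
      intro x hx
      exact Finset.mem_inter.mpr ⟨hfst ▸ hp1.2.2 hx, (mem_dsOn.mp hEX).1 hx⟩
    · intro E hE
      rw [Finset.mem_coe, Finset.mem_filter] at hE
      obtain ⟨hEXBp, hbotE⟩ := (hdsX E).mpr hE.1
      exact Finset.mem_filter.mpr ⟨Finset.mem_filter.mpr
        ⟨mem_pairsOn.mpr ⟨hD, hEXBp, hE.2.trans Finset.inter_subset_left⟩, hbotE⟩, rfl⟩
    · intro p hp
      simp only [Finset.mem_coe, Finset.mem_filter] at hp
      exact Prod.ext hp.2.symm rfl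
    · intro E hE
      rfl
  have step4b : ((pairsOn (X ∪ Bp)).filter fun p => ¬ bot ∈ p.2).card
      = ∑ T ∈ dsOn Bm, ((dsOn Bm).filter fun T' => T' ⊆ T).card * aCoef X Bm T := by
    calc ((pairsOn (X ∪ Bp)).filter fun p => ¬ bot ∈ p.2).card
        = ∑ D ∈ dsOn (X ∪ Bp),
            (((pairsOn (X ∪ Bp)).filter fun p => ¬ bot ∈ p.2).filter fun p => p.1 = D).card :=
          Finset.card_eq_sum_card_fiberwise
            (fun p hp => (mem_pairsOn.mp (Finset.mem_filter.mp hp).1).1)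
      _ = ∑ D ∈ dsOn (X ∪ Bp), ((dsOn X).filter fun E => E ⊆ D ∩ X).card :=
          Finset.sum_congr rfl hfib1
      _ = ∑ A ∈ dsOn X, ∑ D ∈ (dsOn (X ∪ Bp)).filter fun D => D ∩ X = A,
            ((dsOn X).filter fun E => E ⊆ D ∩ X).card :=
          (Finset.sum_fiberwise_of_maps_to hmapsX _).symm
      _ = ∑ A ∈ dsOn X, ((dsOn (X ∪ Bp)).filter fun D => D ∩ X = A).card
            * ((dsOn X).filter fun E => E ⊆ A).card := by
          refine Finset.sum_congr rfl fun A hA => ?_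
          have hcg : ∀ D ∈ (dsOn (X ∪ Bp)).filter fun D => D ∩ X = A,
              ((dsOn X).filter fun E => E ⊆ D ∩ X).card
                = ((dsOn X).filter fun E => E ⊆ A).card := by
            intro D hD
            rw [(Finset.mem_filter.mp hD).2]
          rw [Finset.sum_congr rfl hcg, Finset.sum_const, smul_eq_mul]
      _ = ∑ A ∈ dsOn X, ((dsOn Bm).filter fun U => U ⊆ A ∩ Bm).card
            * ((dsOn X).filter fun E => E ⊆ A).card := by
          refine Finset.sum_congr rfl fun A hA => ?_
          have hflt : (dsOn Bm).filter (fun U => U ⊆ A)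
              = (dsOn Bm).filter fun U => U ⊆ A ∩ Bm := by
            apply Finset.filter_congr
            intro U hU
            have hUBm : U ⊆ Bm := (mem_dsOn.mp hU).1
            simp only [Finset.subset_inter_iff]
            exact ⟨fun h => ⟨h, hUBm⟩, fun h => h.1⟩
          rw [hfiber A hA, hflt]
      _ = ∑ T ∈ dsOn Bm, ∑ A ∈ (dsOn X).filter fun A => A ∩ Bm = T,
            ((dsOn Bm).filter fun U => U ⊆ A ∩ Bm).card
            * ((dsOn X).filter fun E => E ⊆ A).card :=
          (Finset.sum_fiberwise_of_maps_to hmapsBm _).symm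
      _ = ∑ T ∈ dsOn Bm, ((dsOn Bm).filter fun T' => T' ⊆ T).card * aCoef X Bm T := by
          refine Finset.sum_congr rfl fun T hT => ?_
          rw [aCoef, Finset.mul_sum]
          refine Finset.sum_congr rfl fun A hA => ?_
          rw [(Finset.mem_filter.mp hA).2]
  -- assemble
  have hsplit : (pairsOn (X ∪ Bp)).card
      = ((pairsOn (X ∪ Bp)).filter fun p => bot ∈ p.2).card
        + ((pairsOn (X ∪ Bp)).filter fun p => ¬ bot ∈ p.2).card :=
    (Finset.card_filter_add_card_filter_not _).symm
  rw [homCard, homCardOn, step1, step2, step3, hsplit, step4a, step4b]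
  ring
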